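/- For every k ≥ 1 there exists a planar multigraph M_k on n_k = 7k + 1 vertices admitting a plane embedding without 2-faces such that a(M_k) = 3k + 1 = (3/7)n_k + 4/7. -/

import Mathlib

/-! Basic theory of finite multigraphs (parallel edges allowed, no loops),
induced forests, and combinatorial plane embeddings (rotation systems of
genus zero together with a nesting of components, à la Heffter–Edmonds). -/

structure Multigraph (V : Type) where
  mult : V → V → ℕ
  symm : ∀ u v, mult u v = mult v u
  loopless : ∀ v, mult v v = 0

namespace Multigraph

variable {V : Type}

/-- The underlying simple graph: adjacency iff at least one edge. -/
def support (M : Multigraph V) : SimpleGraph V where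
  Adj u v := 0 < M.mult u v
  symm := by
    constructor
    intro u v h
    rw [M.symm]; exact h
  loopless := by
    constructor
    intro v h
    rw [M.loopless] at h; exact lt_irrefl 0 h

/-- A vertex set induces a forest in a multigraph iff no two of its vertices are
joined by parallel edges (which would form a `2`-cycle) and the induced simple
graph is acyclic. -/
def IsInducedForest (M : Multigraph V) (S : Finset V) : Prop :=
  (∀ u ∈ S, ∀ v ∈ S, M.mult u v ≤ 1) ∧
    ((M.support.induce (S : Set V)).IsAcyclic)

/-- `a(M)`: the maximum number of vertices inducing a forest. -/
noncomputable def forestNum (M : Multigraph V) : ℕ :=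
  sSup {k | ∃ S : Finset V, M.IsInducedForest S ∧ S.card = k}

/-- The number of unordered pairs of vertices joined by parallel edges. -/
noncomputable def parallelPairs (M : Multigraph V) : ℕ :=
  Nat.card {p : Sym2 V // ∃ a b, p = s(a, b) ∧ 2 ≤ M.mult a b}

/-- The induced sub-multigraph on a set of vertices. -/
def induce (M : Multigraph V) (S : Set V) : Multigraph S where
  mult u v := M.mult u v
  symm := fun u v => M.symm u v
  loopless := fun v => M.loopless v

/-- Darts: an edge with a direction; the edges from `u` to `v` are indexed by
`Fin (M.mult u v)`. -/
def Dart (M : Multigraph V) : Type :=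
  Σ p : V × V, Fin (M.mult p.1 p.2)

instance dartFinite [Finite V] (M : Multigraph V) : Finite M.Dart := by
  have : Finite (Σ p : V × V, Fin (M.mult p.1 p.2)) := by infer_instance
  exact this

/-- Reversal of a dart. -/
def dartRev (M : Multigraph V) (d : M.Dart) : M.Dart :=
  ⟨(d.1.2, d.1.1), Fin.cast (M.symm d.1.1 d.1.2) d.2⟩

lemma dartRev_involutive (M : Multigraph V) : Function.Involutive M.dartRev := by
  rintro ⟨⟨u, v⟩, i⟩
  simp [dartRev]
  rfl

/-- Reversal of darts as a permutation. -/
def revPerm (M : Multigraph V) : Equiv.Perm M.Dart :=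
  Function.Involutive.toPerm _ (M.dartRev_involutive)

/-- The number of edges (each edge yields two darts). -/
noncomputable def edgeCount (M : Multigraph V) : ℕ := Nat.card M.Dart / 2

/-- The number of connected components. -/
noncomputable def components (M : Multigraph V) : ℕ :=
  Nat.card M.support.ConnectedComponent

/-- The number of connected components containing at least one edge. -/
noncomputable def edgeComponents (M : Multigraph V) : ℕ :=
  Nat.card {c : M.support.ConnectedComponent //
    ∃ d : M.Dart, M.support.connectedComponentMk d.1.1 = c}

/-- The setoid of belonging to the same cycle of a permutation. -/
def cycleSetoid {β : Type*} (φ : Equiv.Perm β) : Setoid β :=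
  ⟨φ.SameCycle, ⟨fun x => Equiv.Perm.SameCycle.refl φ x,
    fun h => h.symm, fun h1 h2 => h1.trans h2⟩⟩

/-- The face permutation of a rotation system: first reverse a dart, then rotate. -/
def facePerm (M : Multigraph V) (rot : Equiv.Perm M.Dart) : Equiv.Perm M.Dart :=
  (M.revPerm).trans rot

/-- Combinatorial faces (per connected component): orbits of the face permutation. -/
def Faces (M : Multigraph V) (rot : Equiv.Perm M.Dart) : Type :=
  Quotient (cycleSetoid (M.facePerm rot))

instance facesFinite [Finite V] (M : Multigraph V) (rot : Equiv.Perm M.Dart) :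
    Finite (M.Faces rot) := by
  have : Finite (Quotient (cycleSetoid (M.facePerm rot))) := Quotient.finite _
  exact this

/-- Connected components that contain at least one dart. -/
def DartComp (M : Multigraph V) : Type :=
  {c : M.support.ConnectedComponent // ∃ d : M.Dart, M.support.connectedComponentMk d.1.1 = c}

/-- The component in which a combinatorial face lives. -/
noncomputable def faceDartComp (M : Multigraph V) (rot : Equiv.Perm M.Dart) :
    M.Faces rot → M.DartComp :=
  fun F => ⟨M.support.connectedComponentMk F.out.1.1, ⟨F.out, rfl⟩⟩

/-- A plane embedding of a multigraph: a rotation system whose combined Euler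
characteristic is that of genus zero on every component, together with a choice
of the outer face of every component (with darts) and a well-founded nesting of
components in faces.  By the Heffter–Edmonds principle this data is exactly the
combinatorial description of an embedding into the plane. -/
structure PlaneEmbedding (M : Multigraph V) where
  rot : Equiv.Perm M.Dart
  rot_tail : ∀ d : M.Dart, (rot d).1.1 = d.1.1
  rot_cyclic : ∀ d e : M.Dart, d.1.1 = e.1.1 → rot.SameCycle d e
  outOrbit : M.DartComp → M.Faces rot
  outOrbit_comp : ∀ c, M.faceDartComp rot (outOrbit c) = c
  encl : M.DartComp → Option (M.Faces rot)
  depth : M.DartComp → ℕ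
  encl_depth : ∀ c F, encl c = some F → depth (M.faceDartComp rot F) < depth c
  euler : Nat.card V + Nat.card (M.Faces rot)
    = M.edgeCount + M.components + M.edgeComponents

/-- `M` is planar iff it has a plane embedding. -/
def IsPlanar (M : Multigraph V) : Prop := Nonempty M.PlaneEmbedding

namespace PlaneEmbedding

variable {M : Multigraph V}

/-- The merging relation identifying the outer combinatorial face of each
component with the face it is nested in (outermost components being merged
into the unbounded face `Sum.inl ()`). -/
def mergeRel (E : M.PlaneEmbedding) :
    (Unit ⊕ M.Faces E.rot) → (Unit ⊕ M.Faces E.rot) → Prop :=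
  fun x y => ∃ c, x = Sum.inr (E.outOrbit c) ∧
    y = Option.elim (E.encl c) (Sum.inl ()) Sum.inr

/-- The faces of the plane embedding: combinatorial faces merged along the
nesting (plus the unbounded face). -/
def PlaneFaces (E : M.PlaneEmbedding) : Type := Quot E.mergeRel

/-- The number of faces of the plane embedding. -/
noncomputable def numFaces (E : M.PlaneEmbedding) : ℕ := Nat.card E.PlaneFaces

/-- The degree of a face: the number of edge-side (= dart) incidences with it. -/
noncomputable def faceDeg (E : M.PlaneEmbedding) (Pf : E.PlaneFaces) : ℕ :=
  Nat.card {d : M.Dart //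
    Quot.mk E.mergeRel (Sum.inr (Quotient.mk (cycleSetoid (M.facePerm E.rot)) d)) = Pf}

/-- The embedding has no `2`-faces. -/
def NoTwoFaces (E : M.PlaneEmbedding) : Prop := ∀ Pf : E.PlaneFaces, E.faceDeg Pf ≠ 2

end PlaneEmbedding

end Multigraph

section
open Classical

/-- The multigraph associated with a simple graph (one edge per adjacency). -/
noncomputable def SimpleGraph.toMultigraph {V : Type} (G : SimpleGraph V) : Multigraph V where
  mult u v := if G.Adj u v then 1 else 0
  symm := by
    intro u v
    by_cases h : G.Adj u v
    · simp [h, h.symm]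
    · have h2 : ¬ G.Adj v u := fun h' => h h'.symm
      simp [h, h2]
  loopless := by intro v; simp

/-- The multigraph obtained from a simple graph by duplicating every edge. -/
noncomputable def SimpleGraph.doubleMultigraph {V : Type} (G : SimpleGraph V) : Multigraph V where
  mult u v := if G.Adj u v then 2 else 0
  symm := by
    intro u v
    by_cases h : G.Adj u v
    · simp [h, h.symm]
    · have h2 : ¬ G.Adj v u := fun h' => h h'.symm
      simp [h, h2]
  loopless := by intro v; simp

/-- An independent set in a simple graph. -/
def SimpleGraph.IsIndepFinset {V : Type} (G : SimpleGraph V) (S : Finset V) : Prop :=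
  ∀ u ∈ S, ∀ v ∈ S, ¬ G.Adj u v

/-- The independence number of a simple graph. -/
noncomputable def SimpleGraph.indepNumber {V : Type} (G : SimpleGraph V) : ℕ :=
  sSup {k | ∃ S : Finset V, G.IsIndepFinset S ∧ S.card = k}

/-- The disjoint union of `k` copies of `K₄`. -/
def cliquesUnion (k : ℕ) : SimpleGraph (Fin k × Fin 4) where
  Adj u v := u.1 = v.1 ∧ u.2 ≠ v.2
  symm := by
    constructor
    rintro u v ⟨h1, h2⟩
    exact ⟨h1.symm, h2.symm⟩
  loopless := by
    constructor
    rintro u ⟨h1, h2⟩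
    exact h2 rfl

/-- Deleting one of the parallel edges between `u` and `v`. -/
noncomputable def Multigraph.deleteParallel {V : Type} (M : Multigraph V) (u v : V) :
    Multigraph V where
  mult x y := if (x = u ∧ y = v) ∨ (x = v ∧ y = u) then M.mult x y - 1 else M.mult x y
  symm := by
    intro x y
    by_cases h : (x = u ∧ y = v) ∨ (x = v ∧ y = u)
    · have h' : (y = u ∧ x = v) ∨ (y = v ∧ x = u) := by tauto
      simp only [if_pos h, if_pos h', M.symm x y]
    · have h' : ¬((y = u ∧ x = v) ∨ (y = v ∧ x = u)) := by tauto
      simp only [if_neg h, if_neg h', M.symm x y]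
  loopless := by
    intro x
    by_cases h : (x = u ∧ x = v) ∨ (x = v ∧ x = u) <;> simp [h, M.loopless x]

end

/-! ### Auxiliary development -/

open Multigraph Equiv

section Gadgets

def TriM : Multigraph (Fin 3) where
  mult a b := if a = b then 0 else 2
  symm := by intro u v; by_cases h : u = v <;> simp [h, eq_comm]
  loopless := by intro v; simp

def K4M : Multigraph (Fin 4) where
  mult a b := if a = b then 0 else 1
  symm := by intro u v; by_cases h : u = v <;> simp [h, eq_comm]
  loopless := by intro v; simp

abbrev TD := TriM.Dart
abbrev KD := K4M.Dart

instance : DecidableEq TD := inferInstanceAs (DecidableEq (Σ p : Fin 3 × Fin 3, Fin (TriM.mult p.1 p.2)))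
instance : Fintype TD := inferInstanceAs (Fintype (Σ p : Fin 3 × Fin 3, Fin (TriM.mult p.1 p.2)))
instance : DecidableEq KD := inferInstanceAs (DecidableEq (Σ p : Fin 4 × Fin 4, Fin (K4M.mult p.1 p.2)))
instance : Fintype KD := inferInstanceAs (Fintype (Σ p : Fin 4 × Fin 4, Fin (K4M.mult p.1 p.2)))

def td (a b : Fin 3) (m : Fin 2) (h : TriM.mult a b = 2 := by decide) : TD :=
  ⟨(a, b), Fin.cast h.symm m⟩
def kd (a b : Fin 4) (h : K4M.mult a b = 1 := by decide) : KD :=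
  ⟨(a, b), Fin.cast h.symm 0⟩

def ρT : Equiv.Perm TD :=
  ([td 0 1 0, td 0 1 1, td 0 2 0, td 0 2 1].formPerm) *
  ([td 1 0 0, td 1 2 0, td 1 2 1, td 1 0 1].formPerm) *
  ([td 2 0 0, td 2 1 1, td 2 1 0, td 2 0 1].formPerm)

def ρK : Equiv.Perm KD :=
  ([kd 0 1, kd 0 2, kd 0 3].formPerm) *
  ([kd 1 0, kd 1 3, kd 1 2].formPerm) *
  ([kd 2 0, kd 2 1, kd 2 3].formPerm) *
  ([kd 3 0, kd 3 2, kd 3 1].formPerm)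

lemma ρT_tail : ∀ d : TD, (ρT d).1.1 = d.1.1 := by decide
lemma ρK_tail : ∀ d : KD, (ρK d).1.1 = d.1.1 := by decide

def φT : Equiv.Perm TD := TriM.facePerm ρT
def φK : Equiv.Perm KD := K4M.facePerm ρK

/-- face labels for the doubled triangle: 0 = outer bigon, 1,2 = inner bigons, 3,4 = triangles -/
def labelT (d : TD) : Fin 5 :=
  if d ∈ [td 0 1 1, td 1 0 0] then 0
  else if d ∈ [td 0 2 1, td 2 0 0] then 1
  else if d ∈ [td 1 2 1, td 2 1 0] then 2
  else if d ∈ [td 0 1 0, td 1 2 0, td 2 0 1] then 3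
  else 4

def labelK (d : KD) : Fin 4 :=
  if d ∈ [kd 0 1, kd 1 3, kd 3 0] then 0
  else if d ∈ [kd 0 2, kd 2 1, kd 1 0] then 1
  else if d ∈ [kd 0 3, kd 3 2, kd 2 0] then 2
  else 3

def sT : Fin 5 → TD := fun l => [td 0 1 1, td 0 2 1, td 1 2 1, td 0 1 0, td 0 2 0].get (Fin.cast (by norm_num) l)
def sK : Fin 4 → KD := fun l => [kd 0 1, kd 0 2, kd 0 3, kd 1 2].get (Fin.cast (by norm_num) l)

lemma labelT_inv : ∀ d : TD, labelT (φT d) = labelT d := by decide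
lemma labelK_inv : ∀ d : KD, labelK (φK d) = labelK d := by decide
lemma labelT_sT : ∀ l, labelT (sT l) = l := by decide
lemma labelK_sK : ∀ l, labelK (sK l) = l := by decide
lemma sT_reach : ∀ d : TD, ∃ n, n ∈ Finset.range 12 ∧ (φT^n) (sT (labelT d)) = d := by decide
lemma sK_reach : ∀ d : KD, ∃ n, n ∈ Finset.range 12 ∧ (φK^n) (sK (labelK d)) = d := by decide
lemma ρT_vertex_cyclic : ∀ d e : TD, d.1.1 = e.1.1 → ∃ n, n ∈ Finset.range 12 ∧ (ρT^n) d = e := by decide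
lemma ρK_vertex_cyclic : ∀ d e : KD, d.1.1 = e.1.1 → ∃ n, n ∈ Finset.range 12 ∧ (ρK^n) d = e := by decide

lemma cardT_fiber : ∀ l : Fin 5, Nat.card {d : TD // labelT d = l} = [2,2,2,3,3].get (Fin.cast (by norm_num) l) := by
  intro l
  rw [Nat.card_eq_fintype_card]
  revert l; decide

lemma cardK_fiber : ∀ l : Fin 4, Nat.card {d : KD // labelK d = l} = 3 := by
  intro l
  rw [Nat.card_eq_fintype_card]
  revert l; decide

lemma φT_rev : ∀ t : TD, ρT (TriM.dartRev t) = φT t := by decide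
lemma φK_rev : ∀ t : KD, ρK (K4M.dartRev t) = φK t := by decide

lemma cardTD : Nat.card TD = 12 := by rw [Nat.card_eq_fintype_card]; decide
lemma cardKD : Nat.card KD = 12 := by rw [Nat.card_eq_fintype_card]; decide

end Gadgets

section Generic

open Equiv

variable {α β ι T L : Type*}

lemma sameCycle_of_mem_pow {φ : Equiv.Perm α} {x y : α} (h : ∃ n, n ∈ Finset.range 12 ∧ (φ^n) x = y) :
    φ.SameCycle x y := by
  obtain ⟨n, -, h⟩ := h
  exact ⟨n, by simpa [zpow_natCast] using h⟩

lemma label_const_zpow {φ : Equiv.Perm α} {f : α → L} (h : ∀ x, f (φ x) = f x) :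
    ∀ (n : ℤ) (x : α), f ((φ^n) x) = f x := by
  have hinv : ∀ x, f (φ⁻¹ x) = f x := fun x => by
    conv_rhs => rw [← (show φ (φ⁻¹ x) = x from (Equiv.eq_symm_apply φ).mp rfl), h]
  intro n
  induction n using Int.induction_on with
  | zero => simp
  | succ n ih => intro x; rw [add_comm, zpow_add, zpow_one, Equiv.Perm.mul_apply, h, ih]
  | pred n ih =>
      intro x
      rw [sub_eq_add_neg, add_comm, zpow_add, Equiv.Perm.mul_apply, zpow_neg_one, hinv, ih]

lemma label_const_of_sameCycle {φ : Equiv.Perm α} {f : α → L} (h : ∀ x, f (φ x) = f x)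
    {x y : α} (hxy : φ.SameCycle x y) : f x = f y := by
  obtain ⟨n, rfl⟩ := hxy
  exact (label_const_zpow h n x).symm

/-- classify a quotient by a label function with a section -/
def classifyQuotient (r : Setoid α) (f : α → L) (s : L → α)
    (hf : ∀ x y, r.r x y → f x = f y) (hs : ∀ x, r.r (s (f x)) x) (h3 : ∀ l, f (s l) = l) :
    Quotient r ≃ L where
  toFun := Quotient.lift f (by intro a b h; exact hf a b h)
  invFun l := Quotient.mk r (s l)
  left_inv := by
    refine Quotient.ind ?_
    intro a
    exact Quotient.sound (hs a)
  right_inv l := by simpa using h3 l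

@[simp] lemma classifyQuotient_mk (r : Setoid α) (f : α → L) (s : L → α) (hf) (hs) (h3) (x : α) :
    classifyQuotient r f s hf hs h3 (Quotient.mk r x) = f x := rfl

@[simp] lemma classifyQuotient_symm (r : Setoid α) (f : α → L) (s : L → α) (hf) (hs) (h3) (l : L) :
    (classifyQuotient r f s hf hs h3).symm l = Quotient.mk r (s l) := rfl

/-- conjugation of permutations as a MulEquiv -/
def permCongrMul (e : α ≃ β) : Equiv.Perm α ≃* Equiv.Perm β where
  toEquiv := e.permCongr
  map_mul' := by
    intro p q
    ext x
    simp [Equiv.permCongr_apply, Equiv.Perm.mul_apply]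

lemma permCongrMul_apply (e : α ≃ β) (σ : Equiv.Perm α) (x : α) :
    permCongrMul e σ (e x) = e (σ x) := by
  simp [permCongrMul, Equiv.permCongr_apply]

lemma sameCycle_permCongrMul (e : α ≃ β) (σ : Equiv.Perm α) {x y : α}
    (h : σ.SameCycle x y) : (permCongrMul e σ).SameCycle (e x) (e y) := by
  obtain ⟨n, hn⟩ := h
  refine ⟨n, ?_⟩
  rw [← map_zpow]
  rw [permCongrMul_apply, hn]

/-- extending a permutation of `T` to `ι × T` as a monoid hom -/
def prodPermHom (ι T : Type*) : Equiv.Perm T →* Equiv.Perm (ι × T) where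
  toFun σ := Equiv.prodCongr (Equiv.refl ι) σ
  map_one' := by ext x <;> simp
  map_mul' := by intro p q; ext x <;> simp

lemma prodPermHom_apply (σ : Equiv.Perm T) (i : ι) (t : T) :
    prodPermHom ι T σ (i, t) = (i, σ t) := rfl

lemma sameCycle_prodPermHom (σ : Equiv.Perm T) (i : ι) {x y : T} (h : σ.SameCycle x y) :
    (prodPermHom ι T σ).SameCycle (i, x) (i, y) := by
  obtain ⟨n, hn⟩ := h
  exact ⟨n, by rw [← map_zpow, prodPermHom_apply, hn]⟩

lemma sameCycle_sumCongrHom_inl {A B : Type*} (σ : Equiv.Perm A) (τ : Equiv.Perm B) {x y : A}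
    (h : σ.SameCycle x y) :
    (Equiv.Perm.sumCongrHom A B (σ, τ)).SameCycle (Sum.inl x) (Sum.inl y) := by
  obtain ⟨n, hn⟩ := h
  refine ⟨n, ?_⟩
  rw [← map_zpow]
  simp [Equiv.Perm.sumCongrHom, Prod.pow_mk, hn]

lemma sameCycle_sumCongrHom_inr {A B : Type*} (σ : Equiv.Perm A) (τ : Equiv.Perm B) {x y : B}
    (h : τ.SameCycle x y) :
    (Equiv.Perm.sumCongrHom A B (σ, τ)).SameCycle (Sum.inr x) (Sum.inr y) := by
  obtain ⟨n, hn⟩ := h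
  refine ⟨n, ?_⟩
  rw [← map_zpow]
  simp [Equiv.Perm.sumCongrHom, Prod.pow_mk, hn]

/-- subtype of a sum splits -/
def subtypeSumEquiv {A B : Type*} (P : A ⊕ B → Prop) :
    {x : A ⊕ B // P x} ≃ {a : A // P (Sum.inl a)} ⊕ {b : B // P (Sum.inr b)} where
  toFun x := match x with
    | ⟨Sum.inl a, h⟩ => Sum.inl ⟨a, h⟩
    | ⟨Sum.inr b, h⟩ => Sum.inr ⟨b, h⟩
  invFun x := match x with
    | Sum.inl ⟨a, h⟩ => ⟨Sum.inl a, h⟩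
    | Sum.inr ⟨b, h⟩ => ⟨Sum.inr b, h⟩
  left_inv := by rintro ⟨(a | b), h⟩ <;> rfl
  right_inv := by rintro (⟨a, h⟩ | ⟨b, h⟩) <;> rfl

lemma card_subtype_sum {A B : Type*} [Finite A] [Finite B] (P : A ⊕ B → Prop) :
    Nat.card {x : A ⊕ B // P x}
      = Nat.card {a : A // P (Sum.inl a)} + Nat.card {b : B // P (Sum.inr b)} := by
  rw [Nat.card_congr (subtypeSumEquiv P), Nat.card_sum]

/-- pinned-index fiber of a product -/
def prodFiberEquiv {Q : T → Prop} (c : ι) :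
    {x : ι × T // x.1 = c ∧ Q x.2} ≃ {t : T // Q t} where
  toFun x := ⟨x.1.2, x.2.2⟩
  invFun t := ⟨(c, t.1), rfl, t.2⟩
  left_inv := by rintro ⟨⟨i, t⟩, rfl, h⟩; rfl
  right_inv := by rintro ⟨t, h⟩; rfl

lemma card_prod_fiber [Finite T] (Q : T → Prop) (c : ι) :
    Nat.card {x : ι × T // x.1 = c ∧ Q x.2} = Nat.card {t : T // Q t} :=
  Nat.card_congr (prodFiberEquiv c)

lemma card_subtype_false {A : Type*} (P : A → Prop) (h : ∀ a, ¬ P a) :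
    Nat.card {a : A // P a} = 0 := by
  have : IsEmpty {a : A // P a} := ⟨fun x => h x.1 x.2⟩
  simp

noncomputable def subtypeOrSplit {A : Type*} (P Q : A → Prop) (hd : ∀ a, ¬ (P a ∧ Q a)) :
    {a : A // P a ∨ Q a} ≃ {a : A // P a} ⊕ {a : A // Q a} := by
  classical
  exact {
    toFun := fun x => if h : P x.1 then Sum.inl ⟨x.1, h⟩ else Sum.inr ⟨x.1, x.2.resolve_left h⟩
    invFun := fun x => match x with
      | Sum.inl ⟨a, h⟩ => ⟨a, Or.inl h⟩
      | Sum.inr ⟨a, h⟩ => ⟨a, Or.inr h⟩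
    left_inv := by
      rintro ⟨a, h⟩
      by_cases hP : P a <;> simp [hP]
    right_inv := by
      rintro (⟨a, h⟩ | ⟨a, h⟩)
      · simp [h]
      · have : ¬ P a := fun hp => hd a ⟨hp, h⟩
        simp [h, this] }

lemma card_subtype_or {A : Type*} [Finite A] (P Q : A → Prop)
    (hd : ∀ a, ¬ (P a ∧ Q a)) :
    Nat.card {a : A // P a ∨ Q a} = Nat.card {a : A // P a} + Nat.card {a : A // Q a} := by
  rw [Nat.card_congr (subtypeOrSplit P Q hd), Nat.card_sum]

end Generic

section Global

abbrev GV (k : ℕ) : Type := (Fin (k-1) × Fin 3) ⊕ (Fin (k+1) × Fin 4)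

instance (k : ℕ) : Fintype (GV k) := by infer_instance

def MG (k : ℕ) : Multigraph (GV k) where
  mult x y := match x, y with
    | Sum.inl (i,a), Sum.inl (j,b) => if i = j then TriM.mult a b else 0
    | Sum.inr (i,a), Sum.inr (j,b) => if i = j then K4M.mult a b else 0
    | _, _ => 0
  symm := by
    rintro (⟨i,a⟩|⟨i,a⟩) (⟨j,b⟩|⟨j,b⟩) <;> simp only []
    · by_cases h : i = j
      · subst h; rw [TriM.symm]
      · rw [if_neg h, if_neg (Ne.symm h)]
    · by_cases h : i = j
      · subst h; rw [K4M.symm]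
      · rw [if_neg h, if_neg (Ne.symm h)]
  loopless := by
    rintro (⟨i,a⟩|⟨i,a⟩) <;> simp [TriM.loopless, K4M.loopless]

@[simp] lemma MG_mult_ll (k : ℕ) (i j : Fin (k-1)) (a b : Fin 3) :
    (MG k).mult (Sum.inl (i,a)) (Sum.inl (j,b)) = if i = j then TriM.mult a b else 0 := rfl
@[simp] lemma MG_mult_rr (k : ℕ) (i j : Fin (k+1)) (a b : Fin 4) :
    (MG k).mult (Sum.inr (i,a)) (Sum.inr (j,b)) = if i = j then K4M.mult a b else 0 := rfl
@[simp] lemma MG_mult_lr (k : ℕ) (i : Fin (k-1)) (j : Fin (k+1)) (a : Fin 3) (b : Fin 4) :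
    (MG k).mult (Sum.inl (i,a)) (Sum.inr (j,b)) = 0 := rfl
@[simp] lemma MG_mult_rl (k : ℕ) (i : Fin (k-1)) (j : Fin (k+1)) (a : Fin 3) (b : Fin 4) :
    (MG k).mult (Sum.inr (j,b)) (Sum.inl (i,a)) = 0 := rfl

abbrev GD (k : ℕ) : Type := (Fin (k-1) × TD) ⊕ (Fin (k+1) × KD)

def eD (k : ℕ) : GD k ≃ (MG k).Dart where
  toFun x := match x with
    | Sum.inl (i, ⟨(a,b), m⟩) =>
        ⟨(Sum.inl (i,a), Sum.inl (i,b)), Fin.cast (by simp) m⟩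
    | Sum.inr (j, ⟨(a,b), m⟩) =>
        ⟨(Sum.inr (j,a), Sum.inr (j,b)), Fin.cast (by simp) m⟩
  invFun d := match d with
    | ⟨(Sum.inl (i,a), Sum.inl (j,b)), m⟩ =>
        if h : i = j then Sum.inl (i, ⟨(a,b), Fin.cast (by simp [h]) m⟩)
        else (Fin.cast (by simp [h]) m).elim0
    | ⟨(Sum.inr (i,a), Sum.inr (j,b)), m⟩ =>
        if h : i = j then Sum.inr (i, ⟨(a,b), Fin.cast (by simp [h]) m⟩)
        else (Fin.cast (by simp [h]) m).elim0
    | ⟨(Sum.inl _, Sum.inr _), m⟩ => m.elim0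
    | ⟨(Sum.inr _, Sum.inl _), m⟩ => m.elim0
  left_inv := by
    rintro (⟨i, ⟨⟨a,b⟩, m⟩⟩ | ⟨j, ⟨⟨a,b⟩, m⟩⟩) <;> (simp; rfl)
  right_inv := by
    rintro ⟨⟨(⟨i,a⟩|⟨i,a⟩), (⟨j,b⟩|⟨j,b⟩)⟩, m⟩
    · by_cases h : i = j
      · subst h; simp; rfl
      · exact absurd m.isLt (by simp [h])
    · exact m.elim0
    · exact m.elim0
    · by_cases h : i = j
      · subst h; simp; rfl
      · exact absurd m.isLt (by simp [h])

abbrev FL (k : ℕ) := (Fin (k-1) × Fin 5) ⊕ (Fin (k+1) × Fin 4)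

end Global

section Global2

variable (k : ℕ)

def locRev : GD k → GD k
  | Sum.inl (i, t) => Sum.inl (i, TriM.dartRev t)
  | Sum.inr (j, t) => Sum.inr (j, K4M.dartRev t)

def tailD : GD k → GV k
  | Sum.inl (i, t) => Sum.inl (i, t.1.1)
  | Sum.inr (j, t) => Sum.inr (j, t.1.1)

lemma eD_tail (x : GD k) : (eD k x).1.1 = tailD k x := by
  rcases x with (⟨i, ⟨⟨a,b⟩, m⟩⟩ | ⟨j, ⟨⟨a,b⟩, m⟩⟩) <;> rfl

lemma eD_rev (x : GD k) : (MG k).dartRev (eD k x) = eD k (locRev k x) := by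
  rcases x with (⟨i, ⟨⟨a,b⟩, m⟩⟩ | ⟨j, ⟨⟨a,b⟩, m⟩⟩) <;>
    simp [Multigraph.dartRev, eD, locRev] <;> rfl

def ρG : Equiv.Perm (GD k) :=
  Equiv.Perm.sumCongrHom _ _ (prodPermHom _ _ ρT, prodPermHom _ _ ρK)

def φG : Equiv.Perm (GD k) :=
  Equiv.Perm.sumCongrHom _ _ (prodPermHom _ _ φT, prodPermHom _ _ φK)

@[simp] lemma ρG_inl (i : Fin (k-1)) (t : TD) : ρG k (Sum.inl (i,t)) = Sum.inl (i, ρT t) := rfl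
@[simp] lemma ρG_inr (j : Fin (k+1)) (t : KD) : ρG k (Sum.inr (j,t)) = Sum.inr (j, ρK t) := rfl
@[simp] lemma φG_inl (i : Fin (k-1)) (t : TD) : φG k (Sum.inl (i,t)) = Sum.inl (i, φT t) := rfl
@[simp] lemma φG_inr (j : Fin (k+1)) (t : KD) : φG k (Sum.inr (j,t)) = Sum.inr (j, φK t) := rfl

def rotG : Equiv.Perm (MG k).Dart := permCongrMul (eD k) (ρG k)

lemma rotG_apply (x : GD k) : rotG k (eD k x) = eD k (ρG k x) := permCongrMul_apply _ _ _

lemma ρG_rev (x : GD k) : ρG k (locRev k x) = φG k x := by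
  rcases x with (⟨i, t⟩ | ⟨j, t⟩) <;>
    simp only [locRev, ρG_inl, ρG_inr, φG_inl, φG_inr, φT_rev, φK_rev]

lemma face_conj : (MG k).facePerm (rotG k) = permCongrMul (eD k) (φG k) := by
  ext d
  obtain ⟨x, rfl⟩ := (eD k).surjective d
  have h1 : (MG k).facePerm (rotG k) (eD k x) = rotG k ((MG k).dartRev (eD k x)) := rfl
  rw [h1, eD_rev, rotG_apply, ρG_rev, permCongrMul_apply]

lemma face_apply (x : GD k) : (MG k).facePerm (rotG k) (eD k x) = eD k (φG k x) := by
  rw [face_conj]; exact permCongrMul_apply _ _ _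

lemma sc_face {x y : GD k} (h : (φG k).SameCycle x y) :
    ((MG k).facePerm (rotG k)).SameCycle (eD k x) (eD k y) := by
  rw [face_conj]; exact sameCycle_permCongrMul _ _ h

lemma sc_rot {x y : GD k} (h : (ρG k).SameCycle x y) :
    (rotG k).SameCycle (eD k x) (eD k y) :=
  sameCycle_permCongrMul _ _ h

def labelG : GD k → FL k
  | Sum.inl (i, t) => Sum.inl (i, labelT t)
  | Sum.inr (j, t) => Sum.inr (j, labelK t)

def secG : FL k → GD k
  | Sum.inl (i, l) => Sum.inl (i, sT l)
  | Sum.inr (j, l) => Sum.inr (j, sK l)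

lemma labelG_inv (x : GD k) : labelG k (φG k x) = labelG k x := by
  rcases x with (⟨i, t⟩ | ⟨j, t⟩) <;> simp [labelG, labelT_inv, labelK_inv]

lemma labelG_sec (l : FL k) : labelG k (secG k l) = l := by
  rcases l with (⟨i, l⟩ | ⟨j, l⟩) <;> simp [labelG, secG, labelT_sT, labelK_sK]

lemma sc_φG (x : GD k) : (φG k).SameCycle (secG k (labelG k x)) x := by
  rcases x with (⟨i, t⟩ | ⟨j, t⟩)
  · exact sameCycle_sumCongrHom_inl _ _ (sameCycle_prodPermHom _ i (sameCycle_of_mem_pow (sT_reach t)))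
  · exact sameCycle_sumCongrHom_inr _ _ (sameCycle_prodPermHom _ j (sameCycle_of_mem_pow (sK_reach t)))

def labelFn : (MG k).Dart → FL k := fun d => labelG k ((eD k).symm d)

def FEq : (MG k).Faces (rotG k) ≃ FL k :=
  classifyQuotient (Multigraph.cycleSetoid ((MG k).facePerm (rotG k)))
    (labelFn k) (fun l => eD k (secG k l))
    (by
      intro x y h
      refine label_const_of_sameCycle (φ := (MG k).facePerm (rotG k)) ?_ h
      intro d
      show labelG k ((eD k).symm ((MG k).facePerm (rotG k) d)) = labelG k ((eD k).symm d)
      obtain ⟨x', rfl⟩ := (eD k).surjective d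
      rw [face_apply]
      simp only [Equiv.symm_apply_apply]
      exact labelG_inv k x')
    (by
      intro x
      show ((MG k).facePerm (rotG k)).SameCycle _ _
      have := sc_face k (sc_φG k ((eD k).symm x))
      simpa [labelFn] using this)
    (by
      intro l
      show labelFn k (eD k (secG k l)) = l
      simp only [labelFn, Equiv.symm_apply_apply]
      exact labelG_sec k l)

lemma FEq_mk (x : GD k) :
    FEq k (Quotient.mk _ (eD k x)) = labelG k x := by
  show labelFn k (eD k x) = _
  simp [labelFn]

lemma FEq_symm (l : FL k) :
    (FEq k).symm l = Quotient.mk _ (eD k (secG k l)) := rfl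

end Global2

section Global3

open SimpleGraph

variable (k : ℕ)

lemma rotG_tail : ∀ d : (MG k).Dart, (rotG k d).1.1 = d.1.1 := by
  intro d
  obtain ⟨x, rfl⟩ := (eD k).surjective d
  rw [rotG_apply, eD_tail, eD_tail]
  rcases x with (⟨i,t⟩|⟨j,t⟩) <;> simp [tailD, ρT_tail, ρK_tail]

lemma rotG_cyclic : ∀ d e : (MG k).Dart, d.1.1 = e.1.1 → (rotG k).SameCycle d e := by
  intro d e h
  obtain ⟨x, rfl⟩ := (eD k).surjective d
  obtain ⟨y, rfl⟩ := (eD k).surjective e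
  rw [eD_tail, eD_tail] at h
  rcases x with (⟨i,t⟩|⟨j,t⟩) <;> rcases y with (⟨i',s⟩|⟨j',s⟩) <;>
    simp [tailD, Prod.ext_iff] at h
  · obtain ⟨h1, h2⟩ := h
    subst h1
    exact sc_rot k (sameCycle_sumCongrHom_inl _ _ (sameCycle_prodPermHom _ _
      (sameCycle_of_mem_pow (ρT_vertex_cyclic t s h2))))
  · obtain ⟨h1, h2⟩ := h
    subst h1
    exact sc_rot k (sameCycle_sumCongrHom_inr _ _ (sameCycle_prodPermHom _ _
      (sameCycle_of_mem_pow (ρK_vertex_cyclic t s h2))))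

abbrev CL (k : ℕ) := Fin (k-1) ⊕ Fin (k+1)

def clV : GV k → CL k
  | Sum.inl (i,_) => Sum.inl i
  | Sum.inr (j,_) => Sum.inr j

def vrep : CL k → GV k
  | Sum.inl i => Sum.inl (i, 0)
  | Sum.inr j => Sum.inr (j, 0)

lemma adj_cl {u v : GV k} (h : (MG k).support.Adj u v) : clV k u = clV k v := by
  rcases u with (⟨i,a⟩|⟨i,a⟩) <;> rcases v with (⟨j,b⟩|⟨j,b⟩) <;>
    simp only [Multigraph.support] at h
  · by_cases hij : i = j
    · subst hij; rfl
    · simp [hij] at h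
  · simp at h
  · simp at h
  · by_cases hij : i = j
    · subst hij; rfl
    · simp [hij] at h

lemma reach_cl {u v : GV k} (h : (MG k).support.Reachable u v) : clV k u = clV k v := by
  obtain ⟨p⟩ := h
  induction p with
  | nil => rfl
  | cons hadj _ ih => exact (adj_cl k hadj).trans ih

lemma reach_vrep (v : GV k) : (MG k).support.Reachable (vrep k (clV k v)) v := by
  rcases v with (⟨i,a⟩|⟨i,a⟩)
  · by_cases h : a = 0
    · subst h; rfl
    · refine SimpleGraph.Adj.reachable ?_
      show 0 < (MG k).mult (Sum.inl (i, 0)) (Sum.inl (i, a))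
      simp [TriM, Ne.symm h]
  · by_cases h : a = 0
    · subst h; rfl
    · refine SimpleGraph.Adj.reachable ?_
      show 0 < (MG k).mult (Sum.inr (i, 0)) (Sum.inr (i, a))
      simp [K4M, Ne.symm h]

def compEquivC : (MG k).support.ConnectedComponent ≃ CL k where
  toFun := Quot.lift (clV k) (fun _ _ h => reach_cl k h)
  invFun c := (MG k).support.connectedComponentMk (vrep k c)
  left_inv := by
    refine Quot.ind ?_
    intro v
    exact (SimpleGraph.ConnectedComponent.sound (reach_vrep k v))
  right_inv := by rintro (i | j) <;> rfl

lemma compEquivC_mk (v : GV k) :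
    compEquivC k ((MG k).support.connectedComponentMk v) = clV k v := rfl

lemma exT : ∀ a : Fin 3, ∃ t : TD, t.1.1 = a := by decide
lemma exK : ∀ a : Fin 4, ∃ t : KD, t.1.1 = a := by decide

lemma exists_dart_at (v : GV k) : ∃ d : (MG k).Dart, d.1.1 = v := by
  rcases v with (⟨i,a⟩|⟨j,a⟩)
  · obtain ⟨t, ht⟩ := exT a
    exact ⟨eD k (Sum.inl (i, t)), by rw [eD_tail]; simp [tailD, ht]⟩
  · obtain ⟨t, ht⟩ := exK a
    exact ⟨eD k (Sum.inr (j, t)), by rw [eD_tail]; simp [tailD, ht]⟩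

lemma dartcomp_all : ∀ c : (MG k).support.ConnectedComponent,
    ∃ d : (MG k).Dart, (MG k).support.connectedComponentMk d.1.1 = c := by
  refine Quot.ind ?_
  intro v
  obtain ⟨d, hd⟩ := exists_dart_at k v
  exact ⟨d, by rw [hd]; rfl⟩

def compEquiv : (MG k).DartComp ≃ CL k :=
  (Equiv.subtypeUnivEquiv (dartcomp_all k)).trans (compEquivC k)

lemma compEquiv_val (c : (MG k).DartComp) : compEquiv k c = compEquivC k c.1 := rfl

-- reachability along face orbits (general)
lemma dart_adj {W : Type} (M : Multigraph W) (d : M.Dart) : M.support.Adj d.1.1 d.1.2 :=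
  lt_of_lt_of_le (Fin.pos d.2) (le_refl _)

lemma face_step_reach {W : Type} (M : Multigraph W) (rot : Equiv.Perm M.Dart)
    (hrot : ∀ d, (rot d).1.1 = d.1.1) (d : M.Dart) :
    M.support.Reachable d.1.1 ((M.facePerm rot) d).1.1 := by
  have h1 : ((M.facePerm rot) d).1.1 = (M.dartRev d).1.1 := hrot _
  rw [h1]
  exact (dart_adj M d).reachable

lemma face_reach {W : Type} (M : Multigraph W) (rot : Equiv.Perm M.Dart)
    (hrot : ∀ d, (rot d).1.1 = d.1.1) {d e : M.Dart}
    (h : (M.facePerm rot).SameCycle d e) : M.support.Reachable d.1.1 e.1.1 := by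
  obtain ⟨n, rfl⟩ := h
  suffices H : ∀ n : ℤ, ∀ d : M.Dart, M.support.Reachable d.1.1 (((M.facePerm rot)^n) d).1.1 by
    exact H n d
  intro n
  have hstep := face_step_reach M rot hrot
  have hstep' : ∀ d : M.Dart, M.support.Reachable d.1.1 ((M.facePerm rot)⁻¹ d).1.1 := by
    intro d
    have := hstep ((M.facePerm rot)⁻¹ d)
    rw [show (M.facePerm rot) ((M.facePerm rot)⁻¹ d) = d from (Equiv.eq_symm_apply _).mp rfl] at this
    exact this.symm
  induction n using Int.induction_on with
  | zero => simp
  | succ n ih =>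
      intro d
      rw [zpow_add, zpow_one, Equiv.Perm.mul_apply]
      exact (hstep d).trans (ih _)
  | pred n ih =>
      intro d
      rw [sub_eq_add_neg, zpow_add, Equiv.Perm.mul_apply, zpow_neg_one]
      exact (hstep' d).trans (ih _)

def clL (k : ℕ) : FL k → CL k
  | Sum.inl (i,_) => Sum.inl i
  | Sum.inr (j,_) => Sum.inr j

lemma tail_secG (l : FL k) : clV k (tailD k (secG k l)) = clL k l := by
  rcases l with (⟨i,l⟩|⟨j,l⟩) <;> rfl

lemma faceComp_val (l : FL k) :
    ((MG k).faceDartComp (rotG k) ((FEq k).symm l)).1 =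
      (MG k).support.connectedComponentMk (vrep k (clL k l)) := by
  show (MG k).support.connectedComponentMk _ = _
  have hsc : ((MG k).facePerm (rotG k)).SameCycle ((FEq k).symm l).out (eD k (secG k l)) :=
    Quotient.exact ((Quotient.out_eq _).trans (FEq_symm k l))
  have hreach := face_reach (MG k) (rotG k) (rotG_tail k) hsc
  have e1 : (MG k).support.connectedComponentMk ((FEq k).symm l).out.1.1
      = (MG k).support.connectedComponentMk (eD k (secG k l)).1.1 :=
    SimpleGraph.ConnectedComponent.sound hreach
  rw [e1, eD_tail]
  have e2 := SimpleGraph.ConnectedComponent.sound (reach_vrep k (tailD k (secG k l)))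
  rw [← e2, tail_secG]

end Global3

section Global4

variable (k : ℕ)

def outL : CL k → FL k
  | Sum.inl i => Sum.inl (i, 0)
  | Sum.inr j => Sum.inr (j, 0)

lemma clL_outL (c : CL k) : clL k (outL k c) = c := by rcases c with (i | j) <;> rfl

def outOrbitG : (MG k).DartComp → (MG k).Faces (rotG k) :=
  fun c => (FEq k).symm (outL k (compEquiv k c))

lemma clV_vrep (c : CL k) : clV k (vrep k c) = c := by rcases c with (i | j) <;> rfl

lemma faceComp_eq (l : FL k) :
    (MG k).faceDartComp (rotG k) ((FEq k).symm l) =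
      (compEquiv k).symm (clL k l) := by
  apply Subtype.ext
  rw [faceComp_val]
  rfl

lemma compEquiv_faceComp (l : FL k) :
    compEquiv k ((MG k).faceDartComp (rotG k) ((FEq k).symm l)) = clL k l := by
  rw [faceComp_eq]
  exact (compEquiv k).apply_symm_apply _

lemma outOrbit_comp_G : ∀ c : (MG k).DartComp,
    (MG k).faceDartComp (rotG k) (outOrbitG k c) = c := by
  intro c
  show (MG k).faceDartComp (rotG k) ((FEq k).symm (outL k (compEquiv k c))) = c
  rw [faceComp_eq, clL_outL]
  exact (compEquiv k).symm_apply_apply c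

def enclL : CL k → Option (FL k)
  | Sum.inl i => if _h : (i : ℕ) = 0 then none
      else some (Sum.inl (⟨(i : ℕ) - 1, by have := i.isLt; omega⟩, 1))
  | Sum.inr j => if _h : 1 ≤ (j : ℕ) ∧ 2 ≤ k then
      (if _h2 : (j : ℕ) < k then some (Sum.inl (⟨(j : ℕ) - 1, by have := j.isLt; omega⟩, 2))
       else some (Sum.inl (⟨k - 2, by omega⟩, 1)))
      else none

def enclG : (MG k).DartComp → Option ((MG k).Faces (rotG k)) :=
  fun c => (enclL k (compEquiv k c)).map (FEq k).symm

def depthL : CL k → ℕ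
  | Sum.inl i => (i : ℕ) + 1
  | Sum.inr j => (j : ℕ) + 1

def depthG : (MG k).DartComp → ℕ := fun c => depthL k (compEquiv k c)

lemma enclL_depth {c : CL k} {l : FL k} (h : enclL k c = some l) :
    depthL k (clL k l) < depthL k c := by
  rcases c with (i | j)
  · have hi := i.isLt
    by_cases h0 : (i:ℕ) = 0
    · simp [enclL, h0] at h
    · simp only [enclL, dif_neg h0, Option.some.injEq] at h
      subst h
      simp only [clL, depthL]
      omega
  · have hj := j.isLt
    by_cases h0 : 1 ≤ (j:ℕ) ∧ 2 ≤ k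
    · by_cases h1 : (j:ℕ) < k
      · simp only [enclL, dif_pos h0, dif_pos h1, Option.some.injEq] at h
        subst h
        simp only [clL, depthL]
        omega
      · simp only [enclL, dif_pos h0, dif_neg h1, Option.some.injEq] at h
        subst h
        simp only [clL, depthL]
        omega
    · simp [enclL, dif_neg h0] at h

lemma encl_depth_G : ∀ (c : (MG k).DartComp) (F : (MG k).Faces (rotG k)),
    enclG k c = some F → depthG k ((MG k).faceDartComp (rotG k) F) < depthG k c := by
  intro c F h
  obtain ⟨l, hl, rfl⟩ := Option.map_eq_some_iff.mp h
  show depthL k (compEquiv k _) < _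
  rw [compEquiv_faceComp]
  exact enclL_depth k hl

-- cardinalities
lemma card_GV : Nat.card (GV k) = 3*(k-1) + 4*(k+1) := by
  simp [Nat.card_eq_fintype_card, mul_comm]

lemma card_faces : Nat.card ((MG k).Faces (rotG k)) = 5*(k-1) + 4*(k+1) := by
  rw [Nat.card_congr (FEq k)]
  simp [Nat.card_eq_fintype_card, mul_comm]

lemma card_dart : Nat.card (MG k).Dart = 12*(k-1) + 12*(k+1) := by
  rw [Nat.card_congr (eD k).symm]
  have h1 : Nat.card (Fin (k-1) × TD) = (k-1) * 12 := by
    rw [Nat.card_prod, cardTD]; simp [Nat.card_eq_fintype_card]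
  have h2 : Nat.card (Fin (k+1) × KD) = (k+1) * 12 := by
    rw [Nat.card_prod, cardKD]; simp [Nat.card_eq_fintype_card]
  rw [Nat.card_sum, h1, h2]
  ring

lemma card_comps : Nat.card ((MG k).support.ConnectedComponent) = (k-1) + (k+1) := by
  rw [Nat.card_congr (compEquivC k), Nat.card_sum]
  simp [Nat.card_eq_fintype_card]

lemma card_dartcomps : Nat.card ((MG k).DartComp) = (k-1) + (k+1) := by
  rw [Nat.card_congr (compEquiv k), Nat.card_sum]
  simp [Nat.card_eq_fintype_card]

lemma euler_G :
    Nat.card (GV k) + Nat.card ((MG k).Faces (rotG k))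
      = (MG k).edgeCount + (MG k).components + (MG k).edgeComponents := by
  have h1 : (MG k).edgeCount = (12*(k-1) + 12*(k+1)) / 2 := by
    rw [Multigraph.edgeCount, card_dart]
  have h2 : (MG k).components = (k-1) + (k+1) := card_comps k
  have h3 : (MG k).edgeComponents = (k-1) + (k+1) := card_dartcomps k
  rw [card_GV, card_faces, h1, h2, h3]
  omega

end Global4

section Global5

variable (k : ℕ)

def PE : (MG k).PlaneEmbedding where
  rot := rotG k
  rot_tail := rotG_tail k
  rot_cyclic := rotG_cyclic k
  outOrbit := outOrbitG k
  outOrbit_comp := outOrbit_comp_G k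
  encl := enclG k
  depth := depthG k
  encl_depth := encl_depth_G k
  euler := euler_G k

def isOutB : FL k → Bool
  | Sum.inl (_, t) => t == 0
  | Sum.inr (_, t) => t == 0

def pstep (l : FL k) : Unit ⊕ FL k :=
  if isOutB k l then Option.elim (enclL k (clL k l)) (Sum.inl ()) Sum.inr else Sum.inr l

lemma isOutB_outL (c : CL k) : isOutB k (outL k c) = true := by
  rcases c with (i | j) <;> rfl

lemma outL_clL {l : FL k} (h : isOutB k l = true) : outL k (clL k l) = l := by
  rcases l with (⟨i,t⟩ | ⟨j,t⟩) <;>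
    simp only [isOutB, beq_iff_eq] at h <;> subst h <;> rfl

lemma enclL_not_out {c : CL k} {l : FL k} (h : enclL k c = some l) : isOutB k l = false := by
  rcases c with (i | j)
  · by_cases h0 : (i:ℕ) = 0
    · simp [enclL, h0] at h
    · simp only [enclL, dif_neg h0, Option.some.injEq] at h
      subst h; rfl
  · by_cases h0 : 1 ≤ (j:ℕ) ∧ 2 ≤ k
    · by_cases h1 : (j:ℕ) < k
      · simp only [enclL, dif_pos h0, dif_pos h1, Option.some.injEq] at h
        subst h; rfl
      · simp only [enclL, dif_pos h0, dif_neg h1, Option.some.injEq] at h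
        subst h; rfl
    · simp [enclL, dif_neg h0] at h

def plabel : Unit ⊕ (MG k).Faces (rotG k) → Unit ⊕ FL k :=
  Sum.elim (fun _ => Sum.inl ()) (fun F => pstep k (FEq k F))

lemma pstep_out (c : CL k) :
    pstep k (outL k c) = Option.elim (enclL k c) (Sum.inl ()) Sum.inr := by
  rw [pstep, if_pos (isOutB_outL k c), clL_outL]

lemma plabel_respects : ∀ x y, (PE k).mergeRel x y → plabel k x = plabel k y := by
  rintro x y ⟨c, rfl, rfl⟩
  show pstep k (FEq k (outOrbitG k c)) = _
  rw [outOrbitG, Equiv.apply_symm_apply, pstep_out]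
  show _ = plabel k (Option.elim (enclG k c) (Sum.inl ()) Sum.inr)
  rw [enclG]
  cases hc : enclL k (compEquiv k c) with
  | none => rfl
  | some l' =>
      show Sum.inr l' = plabel k (Sum.inr ((FEq k).symm l'))
      show Sum.inr l' = pstep k (FEq k ((FEq k).symm l'))
      rw [Equiv.apply_symm_apply, pstep, enclL_not_out k hc]
      rfl

def canon : Unit ⊕ FL k → (PE k).PlaneFaces
  | Sum.inl _ => Quot.mk _ (Sum.inl ())
  | Sum.inr l => Quot.mk _ (Sum.inr ((FEq k).symm l))

lemma canon_eq : ∀ x, Quot.mk (PE k).mergeRel x = canon k (plabel k x) := by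
  rintro (u | F)
  · rfl
  · by_cases h : isOutB k (FEq k F) = true
    · set l := FEq k F with hl
      have hF : F = (FEq k).symm l := by rw [hl]; erw [Equiv.symm_apply_apply]
      have hout : outOrbitG k ((compEquiv k).symm (clL k l)) = F := by
        rw [outOrbitG, Equiv.apply_symm_apply, outL_clL k h, hF]
      have hmerge : (PE k).mergeRel (Sum.inr F)
          (Option.elim (enclG k ((compEquiv k).symm (clL k l))) (Sum.inl ()) Sum.inr) :=
        ⟨(compEquiv k).symm (clL k l), by rw [← hout]; rfl, rfl⟩
      have hq := Quot.sound hmerge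
      rw [hq]
      show _ = canon k (pstep k l)
      rw [pstep, if_pos h, enclG, Equiv.apply_symm_apply]
      cases hc : enclL k (clL k l) with
      | none => rfl
      | some l' => rfl
    · show _ = canon k (pstep k (FEq k F))
      rw [pstep, if_neg h]
      show Quot.mk _ (Sum.inr F) = Quot.mk _ (Sum.inr ((FEq k).symm (FEq k F)))
      erw [Equiv.symm_apply_apply]; rfl

lemma quot_eq_iff (x y : Unit ⊕ (MG k).Faces (rotG k)) :
    Quot.mk (PE k).mergeRel x = Quot.mk (PE k).mergeRel y ↔ plabel k x = plabel k y := by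
  constructor
  · intro h
    have := congrArg (Quot.lift (plabel k) (plabel_respects k)) h
    simpa using this
  · intro h
    exact (canon_eq k x).trans (by rw [h]; exact (canon_eq k y).symm)

end Global5

section Global6

variable (k : ℕ)

@[simp] lemma labelG_inl (a : Fin (k-1) × TD) :
    labelG k (Sum.inl a) = Sum.inl (a.1, labelT a.2) := by rcases a with ⟨i,t⟩; rfl
@[simp] lemma labelG_inr (b : Fin (k+1) × KD) :
    labelG k (Sum.inr b) = Sum.inr (b.1, labelK b.2) := by rcases b with ⟨j,t⟩; rfl

lemma pstep_tri_a (i : Fin (k-1)) (h0 : (i:ℕ) = 0) :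
    pstep k (Sum.inl (i,0)) = Sum.inl () := by
  simp [pstep, isOutB, clL, enclL, h0]

lemma pstep_tri_b (i : Fin (k-1)) (h0 : ¬(i:ℕ) = 0) :
    pstep k (Sum.inl (i,0)) =
      Sum.inr (Sum.inl (⟨(i:ℕ)-1, by have := i.isLt; omega⟩, 1)) := by
  simp [pstep, isOutB, clL, enclL, h0]

lemma pstep_tri_c (i : Fin (k-1)) (lt : Fin 5) (h : lt ≠ 0) :
    pstep k (Sum.inl (i,lt)) = Sum.inr (Sum.inl (i,lt)) := by
  simp [pstep, isOutB, h]

lemma pstep_k4_a (j : Fin (k+1)) (h : ¬(1 ≤ (j:ℕ) ∧ 2 ≤ k)) :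
    pstep k (Sum.inr (j,0)) = Sum.inl () := by
  simp [pstep, isOutB, clL, enclL, h]

lemma pstep_k4_b (j : Fin (k+1)) (h : 1 ≤ (j:ℕ) ∧ 2 ≤ k) (h2 : (j:ℕ) < k) :
    pstep k (Sum.inr (j,0)) =
      Sum.inr (Sum.inl (⟨(j:ℕ)-1, by have := j.isLt; omega⟩, 2)) := by
  simp [pstep, isOutB, clL, enclL, h, h2]

lemma pstep_k4_c (j : Fin (k+1)) (h : 1 ≤ (j:ℕ) ∧ 2 ≤ k) (h2 : ¬(j:ℕ) < k) :
    pstep k (Sum.inr (j,0)) =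
      Sum.inr (Sum.inl (⟨k-2, by omega⟩, 1)) := by
  simp [pstep, isOutB, clL, enclL, h, h2]

lemma pstep_k4_d (j : Fin (k+1)) (lk : Fin 4) (h : lk ≠ 0) :
    pstep k (Sum.inr (j,lk)) = Sum.inr (Sum.inr (j,lk)) := by
  simp [pstep, isOutB, h]

lemma cardT0 : Nat.card {t : TD // labelT t = 0} = 2 := by simpa using cardT_fiber 0
lemma cardT1 : Nat.card {t : TD // labelT t = 1} = 2 := by simpa using cardT_fiber 1
lemma cardT2 : Nat.card {t : TD // labelT t = 2} = 2 := by simpa using cardT_fiber 2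
lemma cardT3 : Nat.card {t : TD // labelT t = 3} = 3 := by simpa using cardT_fiber 3
lemma cardT4 : Nat.card {t : TD // labelT t = 4} = 3 := by simpa using cardT_fiber 4

-- case p = inl () : the unbounded face
lemma countA_top (h2 : 2 ≤ k) :
    Nat.card {a : Fin (k-1) × TD // pstep k (Sum.inl (a.1, labelT a.2)) = Sum.inl ()} = 2 := by
  have hiff : ∀ a : Fin (k-1) × TD,
      (pstep k (Sum.inl (a.1, labelT a.2)) = Sum.inl ())
        ↔ (a.1 = (⟨0, by omega⟩ : Fin (k-1)) ∧ labelT a.2 = 0) := by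
    rintro ⟨i, t⟩
    constructor
    · intro h
      by_cases hl : labelT t = 0
      · rw [hl] at h
        by_cases h0 : (i:ℕ) = 0
        · exact ⟨Fin.ext (by simpa using h0), hl⟩
        · rw [pstep_tri_b k i h0] at h
          simp at h
      · rw [pstep_tri_c k i _ hl] at h
        simp at h
    · rintro ⟨rfl, hl⟩
      rw [hl, pstep_tri_a k _ (by simp)]
  rw [Nat.card_congr (Equiv.subtypeEquivRight hiff),
    Nat.card_congr (prodFiberEquiv (Q := fun t => labelT t = 0) _), cardT0]

lemma countB_top (h2 : 2 ≤ k) :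
    Nat.card {b : Fin (k+1) × KD // pstep k (Sum.inr (b.1, labelK b.2)) = Sum.inl ()} = 3 := by
  have hiff : ∀ b : Fin (k+1) × KD,
      (pstep k (Sum.inr (b.1, labelK b.2)) = Sum.inl ())
        ↔ (b.1 = (0 : Fin (k+1)) ∧ labelK b.2 = 0) := by
    rintro ⟨j, t⟩
    constructor
    · intro h
      by_cases hl : labelK t = 0
      · rw [hl] at h
        by_cases h0 : 1 ≤ (j:ℕ) ∧ 2 ≤ k
        · by_cases h1 : (j:ℕ) < k
          · rw [pstep_k4_b k j h0 h1] at h; simp at h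
          · rw [pstep_k4_c k j h0 h1] at h; simp at h
        · refine ⟨Fin.ext ?_, hl⟩
          simp only [Fin.val_zero]
          omega
      · rw [pstep_k4_d k j _ hl] at h
        simp at h
    · rintro ⟨rfl, hl⟩
      rw [hl, pstep_k4_a k _ (by simp)]
  rw [Nat.card_congr (Equiv.subtypeEquivRight hiff),
    Nat.card_congr (prodFiberEquiv (Q := fun t => labelK t = 0) _), cardK_fiber]

end Global6

section Global7

variable (k : ℕ)

-- p = inr (inl (i0, 0)) : outer bigon labels, never a pstep value
lemma countA_B0 (i0 : Fin (k-1)) :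
    Nat.card {a : Fin (k-1) × TD //
      pstep k (Sum.inl (a.1, labelT a.2)) = Sum.inr (Sum.inl (i0, 0))} = 0 := by
  refine card_subtype_false _ ?_
  rintro ⟨i, t⟩ h
  by_cases hl : labelT t = 0
  · rw [hl] at h
    by_cases h0 : (i:ℕ) = 0
    · rw [pstep_tri_a k i h0] at h; simp at h
    · rw [pstep_tri_b k i h0] at h
      simp only [Sum.inr.injEq, Sum.inl.injEq, Prod.mk.injEq] at h
      exact absurd h.2 (by decide)
  · rw [pstep_tri_c k i _ hl] at h
    simp only [Sum.inr.injEq, Sum.inl.injEq, Prod.mk.injEq] at h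
    exact hl h.2

lemma countB_B0 (i0 : Fin (k-1)) :
    Nat.card {b : Fin (k+1) × KD //
      pstep k (Sum.inr (b.1, labelK b.2)) = Sum.inr (Sum.inl (i0, 0))} = 0 := by
  refine card_subtype_false _ ?_
  rintro ⟨j, t⟩ h
  by_cases hl : labelK t = 0
  · rw [hl] at h
    by_cases h0 : 1 ≤ (j:ℕ) ∧ 2 ≤ k
    · by_cases h1 : (j:ℕ) < k
      · rw [pstep_k4_b k j h0 h1] at h
        simp only [Sum.inr.injEq, Sum.inl.injEq, Prod.mk.injEq] at h
        exact absurd h.2 (by decide)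
      · rw [pstep_k4_c k j h0 h1] at h
        simp only [Sum.inr.injEq, Sum.inl.injEq, Prod.mk.injEq] at h
        exact absurd h.2 (by decide)
    · rw [pstep_k4_a k j h0] at h; simp at h
  · rw [pstep_k4_d k j _ hl] at h; simp at h

-- p = inr (inl (i0, 1)) : the B-bigon of triangle i0
lemma countA_B1_lt (i0 : Fin (k-1)) (hlt : (i0:ℕ) < k-2) :
    Nat.card {a : Fin (k-1) × TD //
      pstep k (Sum.inl (a.1, labelT a.2)) = Sum.inr (Sum.inl (i0, 1))} = 4 := by
  have h2 : 2 ≤ k := by have := i0.isLt; omega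
  have hiff : ∀ a : Fin (k-1) × TD,
      (pstep k (Sum.inl (a.1, labelT a.2)) = Sum.inr (Sum.inl (i0, 1)))
        ↔ ((a.1 = (⟨(i0:ℕ)+1, by omega⟩ : Fin (k-1)) ∧ labelT a.2 = 0)
            ∨ (a.1 = i0 ∧ labelT a.2 = 1)) := by
    rintro ⟨i, t⟩
    constructor
    · intro h
      by_cases hl : labelT t = 0
      · rw [hl] at h
        by_cases h0 : (i:ℕ) = 0
        · rw [pstep_tri_a k i h0] at h; simp at h
        · rw [pstep_tri_b k i h0] at h
          simp only [Sum.inr.injEq, Sum.inl.injEq, Prod.mk.injEq, Fin.ext_iff] at h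
          exact Or.inl ⟨Fin.ext (by simp; omega), hl⟩
      · rw [pstep_tri_c k i _ hl] at h
        simp only [Sum.inr.injEq, Sum.inl.injEq, Prod.mk.injEq] at h
        exact Or.inr ⟨h.1, h.2⟩
    · rintro (⟨h1, hl⟩ | ⟨h1, hl⟩)
      · subst h1
        rw [hl, pstep_tri_b k _ (by simp)]
        simp [Fin.ext_iff]
      · subst h1
        rw [hl, pstep_tri_c k _ _ (by decide)]
  rw [Nat.card_congr (Equiv.subtypeEquivRight hiff),
    card_subtype_or _ _ (by
      rintro ⟨i, t⟩ ⟨⟨_, hq⟩, ⟨_, hq'⟩⟩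
      rw [hq] at hq'; exact absurd hq' (by decide)),
    Nat.card_congr (prodFiberEquiv (Q := fun t => labelT t = 0) _),
    Nat.card_congr (prodFiberEquiv (Q := fun t => labelT t = 1) _), cardT0, cardT1]

lemma countB_B1_lt (i0 : Fin (k-1)) (hlt : (i0:ℕ) < k-2) :
    Nat.card {b : Fin (k+1) × KD //
      pstep k (Sum.inr (b.1, labelK b.2)) = Sum.inr (Sum.inl (i0, 1))} = 0 := by
  refine card_subtype_false _ ?_
  rintro ⟨j, t⟩ h
  by_cases hl : labelK t = 0
  · rw [hl] at h
    by_cases h0 : 1 ≤ (j:ℕ) ∧ 2 ≤ k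
    · by_cases h1 : (j:ℕ) < k
      · rw [pstep_k4_b k j h0 h1] at h
        simp only [Sum.inr.injEq, Sum.inl.injEq, Prod.mk.injEq] at h
        exact absurd h.2 (by decide)
      · rw [pstep_k4_c k j h0 h1] at h
        simp only [Sum.inr.injEq, Sum.inl.injEq, Prod.mk.injEq, Fin.ext_iff] at h
        have := h.1
        omega
    · rw [pstep_k4_a k j h0] at h; simp at h
  · rw [pstep_k4_d k j _ hl] at h; simp at h

lemma countA_B1_eq (i0 : Fin (k-1)) (heq : (i0:ℕ) = k-2) :
    Nat.card {a : Fin (k-1) × TD //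
      pstep k (Sum.inl (a.1, labelT a.2)) = Sum.inr (Sum.inl (i0, 1))} = 2 := by
  have h2 : 2 ≤ k := by have := i0.isLt; omega
  have hiff : ∀ a : Fin (k-1) × TD,
      (pstep k (Sum.inl (a.1, labelT a.2)) = Sum.inr (Sum.inl (i0, 1)))
        ↔ (a.1 = i0 ∧ labelT a.2 = 1) := by
    rintro ⟨i, t⟩
    constructor
    · intro h
      by_cases hl : labelT t = 0
      · rw [hl] at h
        by_cases h0 : (i:ℕ) = 0
        · rw [pstep_tri_a k i h0] at h; simp at h
        · rw [pstep_tri_b k i h0] at h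
          simp only [Sum.inr.injEq, Sum.inl.injEq, Prod.mk.injEq, Fin.ext_iff] at h
          have hi := i.isLt
          have := h.1
          omega
      · rw [pstep_tri_c k i _ hl] at h
        simp only [Sum.inr.injEq, Sum.inl.injEq, Prod.mk.injEq] at h
        exact ⟨h.1, h.2⟩
    · rintro ⟨h1, hl⟩
      subst h1
      rw [hl, pstep_tri_c k _ _ (by decide)]
  rw [Nat.card_congr (Equiv.subtypeEquivRight hiff),
    Nat.card_congr (prodFiberEquiv (Q := fun t => labelT t = 1) _), cardT1]

lemma countB_B1_eq (i0 : Fin (k-1)) (heq : (i0:ℕ) = k-2) :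
    Nat.card {b : Fin (k+1) × KD //
      pstep k (Sum.inr (b.1, labelK b.2)) = Sum.inr (Sum.inl (i0, 1))} = 3 := by
  have h2 : 2 ≤ k := by have := i0.isLt; omega
  have hiff : ∀ b : Fin (k+1) × KD,
      (pstep k (Sum.inr (b.1, labelK b.2)) = Sum.inr (Sum.inl (i0, 1)))
        ↔ (b.1 = (⟨k, by omega⟩ : Fin (k+1)) ∧ labelK b.2 = 0) := by
    rintro ⟨j, t⟩
    constructor
    · intro h
      by_cases hl : labelK t = 0
      · rw [hl] at h
        by_cases h0 : 1 ≤ (j:ℕ) ∧ 2 ≤ k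
        · by_cases h1 : (j:ℕ) < k
          · rw [pstep_k4_b k j h0 h1] at h
            simp only [Sum.inr.injEq, Sum.inl.injEq, Prod.mk.injEq] at h
            exact absurd h.2 (by decide)
          · rw [pstep_k4_c k j h0 h1] at h
            refine ⟨Fin.ext ?_, hl⟩
            have := j.isLt
            simp only []
            omega
        · rw [pstep_k4_a k j h0] at h; simp at h
      · rw [pstep_k4_d k j _ hl] at h; simp at h
    · rintro ⟨h1, hl⟩
      subst h1
      rw [hl, pstep_k4_c k _ (by exact ⟨by show 1 ≤ k; omega, h2⟩) (by show ¬ (k < k); omega)]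
      simp [Fin.ext_iff, heq]
  rw [Nat.card_congr (Equiv.subtypeEquivRight hiff),
    Nat.card_congr (prodFiberEquiv (Q := fun t => labelK t = 0) _), cardK_fiber]

-- p = inr (inl (i0, 2)) : the C-bigon of triangle i0
lemma countA_B2 (i0 : Fin (k-1)) :
    Nat.card {a : Fin (k-1) × TD //
      pstep k (Sum.inl (a.1, labelT a.2)) = Sum.inr (Sum.inl (i0, 2))} = 2 := by
  have hiff : ∀ a : Fin (k-1) × TD,
      (pstep k (Sum.inl (a.1, labelT a.2)) = Sum.inr (Sum.inl (i0, 2)))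
        ↔ (a.1 = i0 ∧ labelT a.2 = 2) := by
    rintro ⟨i, t⟩
    constructor
    · intro h
      by_cases hl : labelT t = 0
      · rw [hl] at h
        by_cases h0 : (i:ℕ) = 0
        · rw [pstep_tri_a k i h0] at h; simp at h
        · rw [pstep_tri_b k i h0] at h
          simp only [Sum.inr.injEq, Sum.inl.injEq, Prod.mk.injEq] at h
          exact absurd h.2 (by decide)
      · rw [pstep_tri_c k i _ hl] at h
        simp only [Sum.inr.injEq, Sum.inl.injEq, Prod.mk.injEq] at h
        exact ⟨h.1, h.2⟩
    · rintro ⟨h1, hl⟩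
      subst h1
      rw [hl, pstep_tri_c k _ _ (by decide)]
  rw [Nat.card_congr (Equiv.subtypeEquivRight hiff),
    Nat.card_congr (prodFiberEquiv (Q := fun t => labelT t = 2) _), cardT2]

lemma countB_B2 (i0 : Fin (k-1)) :
    Nat.card {b : Fin (k+1) × KD //
      pstep k (Sum.inr (b.1, labelK b.2)) = Sum.inr (Sum.inl (i0, 2))} = 3 := by
  have h2 : 2 ≤ k := by have := i0.isLt; omega
  have hi0 := i0.isLt
  have hiff : ∀ b : Fin (k+1) × KD,
      (pstep k (Sum.inr (b.1, labelK b.2)) = Sum.inr (Sum.inl (i0, 2)))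
        ↔ (b.1 = (⟨(i0:ℕ)+1, by omega⟩ : Fin (k+1)) ∧ labelK b.2 = 0) := by
    rintro ⟨j, t⟩
    constructor
    · intro h
      by_cases hl : labelK t = 0
      · rw [hl] at h
        by_cases h0 : 1 ≤ (j:ℕ) ∧ 2 ≤ k
        · by_cases h1 : (j:ℕ) < k
          · rw [pstep_k4_b k j h0 h1] at h
            simp only [Sum.inr.injEq, Sum.inl.injEq, Prod.mk.injEq, Fin.ext_iff] at h
            refine ⟨Fin.ext ?_, hl⟩
            have := h.1
            simp only [] at this ⊢
            omega
          · rw [pstep_k4_c k j h0 h1] at h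
            simp only [Sum.inr.injEq, Sum.inl.injEq, Prod.mk.injEq] at h
            exact absurd h.2 (by decide)
        · rw [pstep_k4_a k j h0] at h; simp at h
      · rw [pstep_k4_d k j _ hl] at h; simp at h
    · rintro ⟨h1, hl⟩
      subst h1
      rw [hl, pstep_k4_b k _ (by exact ⟨by show 1 ≤ (i0:ℕ)+1; omega, h2⟩) (by show (i0:ℕ)+1 < k; omega)]
      simp [Fin.ext_iff]
  rw [Nat.card_congr (Equiv.subtypeEquivRight hiff),
    Nat.card_congr (prodFiberEquiv (Q := fun t => labelK t = 0) _), cardK_fiber]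

-- p = inr (inl (i0, m)) for m = 3, 4 : triangle 3-faces
lemma countA_B34 (i0 : Fin (k-1)) (m : Fin 5) (hm : m = 3 ∨ m = 4) :
    Nat.card {a : Fin (k-1) × TD //
      pstep k (Sum.inl (a.1, labelT a.2)) = Sum.inr (Sum.inl (i0, m))} = 3 := by
  have hm0 : m ≠ 0 := by rcases hm with rfl | rfl <;> decide
  have hm1 : m ≠ 1 := by rcases hm with rfl | rfl <;> decide
  have hiff : ∀ a : Fin (k-1) × TD,
      (pstep k (Sum.inl (a.1, labelT a.2)) = Sum.inr (Sum.inl (i0, m)))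
        ↔ (a.1 = i0 ∧ labelT a.2 = m) := by
    rintro ⟨i, t⟩
    constructor
    · intro h
      by_cases hl : labelT t = 0
      · rw [hl] at h
        by_cases h0 : (i:ℕ) = 0
        · rw [pstep_tri_a k i h0] at h; simp at h
        · rw [pstep_tri_b k i h0] at h
          simp only [Sum.inr.injEq, Sum.inl.injEq, Prod.mk.injEq] at h
          exact absurd h.2.symm hm1
      · rw [pstep_tri_c k i _ hl] at h
        simp only [Sum.inr.injEq, Sum.inl.injEq, Prod.mk.injEq] at h
        exact ⟨h.1, h.2⟩
    · rintro ⟨h1, hl⟩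
      subst h1
      rw [hl, pstep_tri_c k _ _ hm0]
  rw [Nat.card_congr (Equiv.subtypeEquivRight hiff),
    Nat.card_congr (prodFiberEquiv (Q := fun t => labelT t = m) _)]
  rcases hm with rfl | rfl
  · exact cardT3
  · exact cardT4

lemma countB_B34 (i0 : Fin (k-1)) (m : Fin 5) (hm : m = 3 ∨ m = 4) :
    Nat.card {b : Fin (k+1) × KD //
      pstep k (Sum.inr (b.1, labelK b.2)) = Sum.inr (Sum.inl (i0, m))} = 0 := by
  have hm1 : m ≠ 1 := by rcases hm with rfl | rfl <;> decide
  have hm2 : m ≠ 2 := by rcases hm with rfl | rfl <;> decide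
  refine card_subtype_false _ ?_
  rintro ⟨j, t⟩ h
  by_cases hl : labelK t = 0
  · rw [hl] at h
    by_cases h0 : 1 ≤ (j:ℕ) ∧ 2 ≤ k
    · by_cases h1 : (j:ℕ) < k
      · rw [pstep_k4_b k j h0 h1] at h
        simp only [Sum.inr.injEq, Sum.inl.injEq, Prod.mk.injEq] at h
        exact hm2 h.2.symm
      · rw [pstep_k4_c k j h0 h1] at h
        simp only [Sum.inr.injEq, Sum.inl.injEq, Prod.mk.injEq] at h
        exact hm1 h.2.symm
    · rw [pstep_k4_a k j h0] at h; simp at h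
  · rw [pstep_k4_d k j _ hl] at h; simp at h

-- p = inr (inr (j0, m))
lemma countA_R (j0 : Fin (k+1)) (m : Fin 4) :
    Nat.card {a : Fin (k-1) × TD //
      pstep k (Sum.inl (a.1, labelT a.2)) = Sum.inr (Sum.inr (j0, m))} = 0 := by
  refine card_subtype_false _ ?_
  rintro ⟨i, t⟩ h
  by_cases hl : labelT t = 0
  · rw [hl] at h
    by_cases h0 : (i:ℕ) = 0
    · rw [pstep_tri_a k i h0] at h; simp at h
    · rw [pstep_tri_b k i h0] at h; simp at h
  · rw [pstep_tri_c k i _ hl] at h; simp at h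

lemma countB_R0 (j0 : Fin (k+1)) :
    Nat.card {b : Fin (k+1) × KD //
      pstep k (Sum.inr (b.1, labelK b.2)) = Sum.inr (Sum.inr (j0, 0))} = 0 := by
  refine card_subtype_false _ ?_
  rintro ⟨j, t⟩ h
  by_cases hl : labelK t = 0
  · rw [hl] at h
    by_cases h0 : 1 ≤ (j:ℕ) ∧ 2 ≤ k
    · by_cases h1 : (j:ℕ) < k
      · rw [pstep_k4_b k j h0 h1] at h; simp at h
      · rw [pstep_k4_c k j h0 h1] at h; simp at h
    · rw [pstep_k4_a k j h0] at h; simp at h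
  · rw [pstep_k4_d k j _ hl] at h
    simp only [Sum.inr.injEq, Prod.mk.injEq] at h
    exact hl h.2

lemma countB_Rm (j0 : Fin (k+1)) (m : Fin 4) (hm : m ≠ 0) :
    Nat.card {b : Fin (k+1) × KD //
      pstep k (Sum.inr (b.1, labelK b.2)) = Sum.inr (Sum.inr (j0, m))} = 3 := by
  have hiff : ∀ b : Fin (k+1) × KD,
      (pstep k (Sum.inr (b.1, labelK b.2)) = Sum.inr (Sum.inr (j0, m)))
        ↔ (b.1 = j0 ∧ labelK b.2 = m) := by
    rintro ⟨j, t⟩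
    constructor
    · intro h
      by_cases hl : labelK t = 0
      · rw [hl] at h
        by_cases h0 : 1 ≤ (j:ℕ) ∧ 2 ≤ k
        · by_cases h1 : (j:ℕ) < k
          · rw [pstep_k4_b k j h0 h1] at h; simp at h
          · rw [pstep_k4_c k j h0 h1] at h; simp at h
        · rw [pstep_k4_a k j h0] at h; simp at h
      · rw [pstep_k4_d k j _ hl] at h
        simp only [Sum.inr.injEq, Prod.mk.injEq] at h
        exact ⟨h.1, h.2⟩
    · rintro ⟨h1, hl⟩
      subst h1
      rw [hl, pstep_k4_d k _ _ hm]
  rw [Nat.card_congr (Equiv.subtypeEquivRight hiff),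
    Nat.card_congr (prodFiberEquiv (Q := fun t => labelK t = m) _), cardK_fiber]

end Global7

section Global8

variable (k : ℕ)

-- wrappers with defeq-flexible labels
lemma countA_B0' (i0 : Fin (k-1)) (m : Fin 5) (hm : m = 0) :
    Nat.card {a : Fin (k-1) × TD //
      pstep k (Sum.inl (a.1, labelT a.2)) = Sum.inr (Sum.inl (i0, m))} = 0 := by
  subst hm; exact countA_B0 k i0
lemma countB_B0' (i0 : Fin (k-1)) (m : Fin 5) (hm : m = 0) :
    Nat.card {b : Fin (k+1) × KD //
      pstep k (Sum.inr (b.1, labelK b.2)) = Sum.inr (Sum.inl (i0, m))} = 0 := by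
  subst hm; exact countB_B0 k i0
lemma countA_B1_lt' (i0 : Fin (k-1)) (m : Fin 5) (hm : m = 1) (hlt : (i0:ℕ) < k-2) :
    Nat.card {a : Fin (k-1) × TD //
      pstep k (Sum.inl (a.1, labelT a.2)) = Sum.inr (Sum.inl (i0, m))} = 4 := by
  subst hm; exact countA_B1_lt k i0 hlt
lemma countB_B1_lt' (i0 : Fin (k-1)) (m : Fin 5) (hm : m = 1) (hlt : (i0:ℕ) < k-2) :
    Nat.card {b : Fin (k+1) × KD //
      pstep k (Sum.inr (b.1, labelK b.2)) = Sum.inr (Sum.inl (i0, m))} = 0 := by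
  subst hm; exact countB_B1_lt k i0 hlt
lemma countA_B1_eq' (i0 : Fin (k-1)) (m : Fin 5) (hm : m = 1) (heq : (i0:ℕ) = k-2) :
    Nat.card {a : Fin (k-1) × TD //
      pstep k (Sum.inl (a.1, labelT a.2)) = Sum.inr (Sum.inl (i0, m))} = 2 := by
  subst hm; exact countA_B1_eq k i0 heq
lemma countB_B1_eq' (i0 : Fin (k-1)) (m : Fin 5) (hm : m = 1) (heq : (i0:ℕ) = k-2) :
    Nat.card {b : Fin (k+1) × KD //
      pstep k (Sum.inr (b.1, labelK b.2)) = Sum.inr (Sum.inl (i0, m))} = 3 := by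
  subst hm; exact countB_B1_eq k i0 heq
lemma countA_B2' (i0 : Fin (k-1)) (m : Fin 5) (hm : m = 2) :
    Nat.card {a : Fin (k-1) × TD //
      pstep k (Sum.inl (a.1, labelT a.2)) = Sum.inr (Sum.inl (i0, m))} = 2 := by
  subst hm; exact countA_B2 k i0
lemma countB_B2' (i0 : Fin (k-1)) (m : Fin 5) (hm : m = 2) :
    Nat.card {b : Fin (k+1) × KD //
      pstep k (Sum.inr (b.1, labelK b.2)) = Sum.inr (Sum.inl (i0, m))} = 3 := by
  subst hm; exact countB_B2 k i0
lemma countB_R0' (j0 : Fin (k+1)) (m : Fin 4) (hm : m = 0) :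
    Nat.card {b : Fin (k+1) × KD //
      pstep k (Sum.inr (b.1, labelK b.2)) = Sum.inr (Sum.inr (j0, m))} = 0 := by
  subst hm; exact countB_R0 k j0

lemma count_ne_two (hk : 1 ≤ k) (p : Unit ⊕ FL k) :
    Nat.card {x : GD k // pstep k (labelG k x) = p} ≠ 2 := by
  have hsplit : Nat.card {x : GD k // pstep k (labelG k x) = p}
      = Nat.card {a : Fin (k-1) × TD // pstep k (Sum.inl (a.1, labelT a.2)) = p}
        + Nat.card {b : Fin (k+1) × KD // pstep k (Sum.inr (b.1, labelK b.2)) = p} := by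
    rw [card_subtype_sum]
    simp only [labelG_inl, labelG_inr]
  rw [hsplit]
  rcases p with u | (⟨i0, m⟩ | ⟨j0, m⟩)
  · cases u
    by_cases h2 : 2 ≤ k
    · rw [countA_top k h2, countB_top k h2]
      omega
    · have hk1 : k = 1 := by omega
      subst hk1
      have hA : Nat.card {a : Fin (1-1) × TD //
          pstep 1 (Sum.inl (a.1, labelT a.2)) = Sum.inl ()} = 0 :=
        card_subtype_false _ (fun a _ => a.1.elim0)
      rw [hA, Nat.card_eq_fintype_card]
      decide
  · fin_cases m
    · rw [countA_B0' k i0 _ (by decide), countB_B0' k i0 _ (by decide)]; omega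
    · by_cases hc : (i0:ℕ) < k - 2
      · rw [countA_B1_lt' k i0 _ (by decide) hc, countB_B1_lt' k i0 _ (by decide) hc]; omega
      · have heq : (i0:ℕ) = k - 2 := by have := i0.isLt; omega
        rw [countA_B1_eq' k i0 _ (by decide) heq, countB_B1_eq' k i0 _ (by decide) heq]; omega
    · rw [countA_B2' k i0 _ (by decide), countB_B2' k i0 _ (by decide)]; omega
    · rw [countA_B34 k i0 _ (by decide), countB_B34 k i0 _ (by decide)]; omega
    · rw [countA_B34 k i0 _ (by decide), countB_B34 k i0 _ (by decide)]; omega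
  · fin_cases m
    · rw [countA_R k j0 _, countB_R0' k j0 _ (by decide)]; omega
    · rw [countA_R k j0 _, countB_Rm k j0 _ (by decide)]; omega
    · rw [countA_R k j0 _, countB_Rm k j0 _ (by decide)]; omega
    · rw [countA_R k j0 _, countB_Rm k j0 _ (by decide)]; omega

lemma noTwoFaces_G (hk : 1 ≤ k) : (PE k).NoTwoFaces := by
  intro Pf
  obtain ⟨z, rfl⟩ := Quot.exists_rep Pf
  show (PE k).faceDeg (Quot.mk _ z) ≠ 2
  unfold Multigraph.PlaneEmbedding.faceDeg
  have hiff : ∀ d : (MG k).Dart,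
      (Quot.mk (PE k).mergeRel
          (Sum.inr (Quotient.mk (Multigraph.cycleSetoid ((MG k).facePerm (PE k).rot)) d))
        = Quot.mk (PE k).mergeRel z)
        ↔ pstep k (labelFn k d) = plabel k z := by
    intro d
    refine (quot_eq_iff k _ _).trans ?_
    exact Iff.rfl
  rw [Nat.card_congr (Equiv.subtypeEquivRight hiff)]
  have hcard : Nat.card {d : (MG k).Dart // pstep k (labelFn k d) = plabel k z}
      = Nat.card {x : GD k // pstep k (labelG k x) = plabel k z} :=
    Nat.card_congr (Equiv.subtypeEquiv (eD k).symm (fun d => Iff.rfl))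
  rw [hcard]
  exact count_ne_two k hk (plabel k z)

end Global8

section Global9

open SimpleGraph

lemma acyclic_of_unique_nbr {α : Type*} (G : SimpleGraph α)
    (h : ∀ x y z, G.Adj x y → G.Adj x z → y = z) : G.IsAcyclic := by
  rw [SimpleGraph.isAcyclic_iff_forall_adj_isBridge]
  intro v w hvw
  rw [SimpleGraph.isBridge_iff]
  intro hreach
  obtain ⟨p⟩ := hreach
  cases p with
  | nil => exact G.loopless.irrefl v hvw
  | @cons _ y _ hadj q =>
      rw [SimpleGraph.deleteEdges_adj] at hadj
      obtain ⟨hGadj, hnot⟩ := hadj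
      have hyw : y = w := h v y w hGadj hvw
      subst hyw
      exact hnot (by simp)

variable (k : ℕ)

def emb2 : Fin 2 → Fin 4 := Fin.castLE (by omega)

lemma emb2_inj : Function.Injective emb2 := Fin.castLE_injective _

def FS : Finset (GV k) :=
  (Finset.univ.image (fun i : Fin (k-1) => (Sum.inl (i, (0:Fin 3)) : GV k))) ∪
  (Finset.univ.image (fun p : Fin (k+1) × Fin 2 => (Sum.inr (p.1, emb2 p.2) : GV k)))

lemma FS_mem {v : GV k} : v ∈ FS k ↔
    (∃ i, v = Sum.inl (i, 0)) ∨ (∃ j a, v = Sum.inr (j, emb2 a)) := by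
  simp only [FS, Finset.mem_union, Finset.mem_image, Finset.mem_univ, true_and]
  constructor
  · rintro (⟨i, rfl⟩ | ⟨⟨j, a⟩, rfl⟩)
    · exact Or.inl ⟨i, rfl⟩
    · exact Or.inr ⟨j, a, rfl⟩
  · rintro (⟨i, rfl⟩ | ⟨j, a, rfl⟩)
    · exact Or.inl ⟨i, rfl⟩
    · exact Or.inr ⟨⟨j, a⟩, rfl⟩

lemma FS_card (hk : 1 ≤ k) : (FS k).card = 3*k+1 := by
  rw [FS, Finset.card_union_of_disjoint (by
    rw [Finset.disjoint_left]
    rintro v hv hv'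
    simp only [Finset.mem_image, Finset.mem_univ, true_and] at hv hv'
    obtain ⟨i, rfl⟩ := hv
    obtain ⟨p, hp⟩ := hv'
    exact nomatch hp)]
  rw [Finset.card_image_of_injective _ (fun a b hab => by
      simpa using hab),
    Finset.card_image_of_injective _ (fun a b hab => by
      rcases a with ⟨j, a2⟩; rcases b with ⟨j', b2⟩
      simp only [Sum.inr.injEq, Prod.mk.injEq] at hab
      exact Prod.ext hab.1 (emb2_inj hab.2))]
  simp only [Finset.card_univ, Fintype.card_fin, Fintype.card_prod]
  omega

lemma FS_forest : (MG k).IsInducedForest (FS k) := by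
  constructor
  · intro u hu v hv
    rw [FS_mem] at hu hv
    rcases hu with (⟨i, rfl⟩ | ⟨j, a, rfl⟩) <;> rcases hv with (⟨i', rfl⟩ | ⟨j', b, rfl⟩)
    · rw [MG_mult_ll]
      by_cases h : i = i' <;> simp [h, TriM]
    · rw [MG_mult_lr]; omega
    · rw [MG_mult_rl]; omega
    · rw [MG_mult_rr]
      by_cases h : j = j' <;> simp [h, K4M] <;> split <;> omega
  · apply acyclic_of_unique_nbr
    rintro ⟨x, hx⟩ ⟨y, hy⟩ ⟨z, hz⟩ hxy hxz
    rw [Finset.mem_coe, FS_mem] at hx hy hz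
    have hxy' : (MG k).support.Adj x y := hxy
    have hxz' : (MG k).support.Adj x z := hxz
    rcases hx with (⟨i, rfl⟩ | ⟨j, a, rfl⟩)
    · exfalso
      rcases hy with (⟨i', rfl⟩ | ⟨j', b, rfl⟩)
      · have : 0 < (MG k).mult (Sum.inl (i,(0:Fin 3))) (Sum.inl (i',(0:Fin 3))) := hxy'
        rw [MG_mult_ll] at this
        by_cases h : i = i' <;> simp [h, TriM] at this
      · have : 0 < (MG k).mult (Sum.inl (i,(0:Fin 3))) (Sum.inr (j', emb2 b)) := hxy'
        rw [MG_mult_lr] at this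
        omega
    · rcases hy with (⟨i', rfl⟩ | ⟨j', b, rfl⟩)
      · exfalso
        have : 0 < (MG k).mult (Sum.inr (j, emb2 a)) (Sum.inl (i',(0:Fin 3))) := hxy'
        rw [MG_mult_rl] at this
        omega
      · rcases hz with (⟨i'', rfl⟩ | ⟨j'', c, rfl⟩)
        · exfalso
          have : 0 < (MG k).mult (Sum.inr (j, emb2 a)) (Sum.inl (i'',(0:Fin 3))) := hxz'
          rw [MG_mult_rl] at this
          omega
        · have h1 : 0 < (MG k).mult (Sum.inr (j, emb2 a)) (Sum.inr (j', emb2 b)) := hxy'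
          have h2 : 0 < (MG k).mult (Sum.inr (j, emb2 a)) (Sum.inr (j'', emb2 c)) := hxz'
          rw [MG_mult_rr] at h1 h2
          have hj1 : j = j' := by by_contra hne; simp [hne] at h1
          have hj2 : j = j'' := by by_contra hne; simp [hne] at h2
          subst hj1; subst hj2
          simp only [if_pos rfl, K4M] at h1 h2
          have hb : emb2 b ≠ emb2 a := by
            intro hcon; rw [hcon] at h1; simp [K4M] at h1
          have hc : emb2 c ≠ emb2 a := by
            intro hcon; rw [hcon] at h2; simp [K4M] at h2
          have hba : b ≠ a := fun hcon => hb (by rw [hcon])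
          have hca : c ≠ a := fun hcon => hc (by rw [hcon])
          have hbc : b = c := by
            have hgen : ∀ a b c : Fin 2, b ≠ a → c ≠ a → b = c := by decide
            exact hgen a b c hba hca
          apply Subtype.ext
          simp [hbc]

end Global9

section Global10

open SimpleGraph

variable (k : ℕ)

lemma tri_fiber_le (S : Finset (GV k)) (hmult : ∀ u ∈ S, ∀ v ∈ S, (MG k).mult u v ≤ 1)
    (i : Fin (k-1)) : (S.filter (fun v => clV k v = Sum.inl i)).card ≤ 1 := by
  refine Finset.card_le_one.mpr ?_
  intro a ha b hb
  simp only [Finset.mem_filter] at ha hb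
  obtain ⟨haS, hac⟩ := ha
  obtain ⟨hbS, hbc⟩ := hb
  rcases a with (⟨i1,x⟩|⟨j1,x⟩)
  · rcases b with (⟨i2,y⟩|⟨j2,y⟩)
    · have e1 : i1 = i := by simpa [clV] using hac
      have e2 : i2 = i := by simpa [clV] using hbc
      have e3 : i1 = i2 := e1.trans e2.symm
      subst e3
      by_contra hne
      have hxy : x ≠ y := fun h => hne (by rw [h])
      have hm := hmult _ haS _ hbS
      rw [MG_mult_ll, if_pos rfl] at hm
      simp [TriM, hxy] at hm
    · exfalso; simp [clV] at hbc
  · exfalso; simp [clV] at hac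

lemma k4_fiber_le (S : Finset (GV k))
    (hacyc : ((MG k).support.induce (↑S : Set (GV k))).IsAcyclic)
    (j : Fin (k+1)) : (S.filter (fun v => clV k v = Sum.inr j)).card ≤ 2 := by
  by_contra hgt
  push_neg at hgt
  rw [Finset.two_lt_card_iff] at hgt
  obtain ⟨a, b, c, ha, hb, hc, hab, hac, hbc⟩ := hgt
  have hform : ∀ v ∈ S.filter (fun v => clV k v = Sum.inr j), ∃ x : Fin 4, v = Sum.inr (j, x) := by
    intro v hv
    simp only [Finset.mem_filter] at hv
    rcases v with (⟨i1,x⟩|⟨j1,x⟩)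
    · exfalso; simp [clV] at hv
    · have hj : j1 = j := by simpa [clV] using hv.2
      exact ⟨x, by rw [hj]⟩
  obtain ⟨x, rfl⟩ := hform a ha
  obtain ⟨y, rfl⟩ := hform b hb
  obtain ⟨z, rfl⟩ := hform c hc
  have hxy : x ≠ y := fun h => hab (by rw [h])
  have hxz : x ≠ z := fun h => hac (by rw [h])
  have hyz : y ≠ z := fun h => hbc (by rw [h])
  have hxA : (Sum.inr (j,x) : GV k) ∈ (↑S : Set (GV k)) := (Finset.mem_filter.mp ha).1
  have hyA : (Sum.inr (j,y) : GV k) ∈ (↑S : Set (GV k)) := (Finset.mem_filter.mp hb).1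
  have hzA : (Sum.inr (j,z) : GV k) ∈ (↑S : Set (GV k)) := (Finset.mem_filter.mp hc).1
  let A : ↥(↑S : Set (GV k)) := ⟨_, hxA⟩
  let B : ↥(↑S : Set (GV k)) := ⟨_, hyA⟩
  let C : ↥(↑S : Set (GV k)) := ⟨_, hzA⟩
  have adjSup : ∀ u v : Fin 4, u ≠ v →
      (MG k).support.Adj (Sum.inr (j,u) : GV k) (Sum.inr (j,v)) := by
    intro u v huv
    show 0 < (MG k).mult _ _
    rw [MG_mult_rr, if_pos rfl]
    simp [K4M, huv]
  have hAB : ((MG k).support.induce (↑S : Set (GV k))).Adj A B := adjSup x y hxy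
  have hBC : ((MG k).support.induce (↑S : Set (GV k))).Adj B C := adjSup y z hyz
  have hCA : ((MG k).support.induce (↑S : Set (GV k))).Adj C A := adjSup z x (Ne.symm hxz)
  have hABn : A ≠ B := fun h => hab (congrArg Subtype.val h)
  have hACn : A ≠ C := fun h => hac (congrArg Subtype.val h)
  have hBCn : B ≠ C := fun h => hbc (congrArg Subtype.val h)
  let w : ((MG k).support.induce (↑S : Set (GV k))).Walk A A :=
    SimpleGraph.Walk.cons hAB (SimpleGraph.Walk.cons hBC (SimpleGraph.Walk.cons hCA SimpleGraph.Walk.nil))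
  have hBAn : B ≠ A := hABn.symm
  have hCAn : C ≠ A := hACn.symm
  have hCBn : C ≠ B := hBCn.symm
  have e1 : ¬ (s(A,B) = s(B,C)) := by rw [Sym2.eq_iff]; tauto
  have e2 : ¬ (s(A,B) = s(C,A)) := by rw [Sym2.eq_iff]; tauto
  have e3 : ¬ (s(B,C) = s(C,A)) := by rw [Sym2.eq_iff]; tauto
  have hcyc : w.IsCycle := by
    rw [SimpleGraph.Walk.isCycle_def]
    refine ⟨?_, by simp [w], ?_⟩
    · rw [SimpleGraph.Walk.isTrail_def]
      simp [w, e1, e2, e3]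
      tauto
    · simp [w, hABn, hACn, hBCn, hBAn, hCAn, hCBn]
  exact hacyc w hcyc

lemma forest_upper (hk : 1 ≤ k) (S : Finset (GV k)) (hS : (MG k).IsInducedForest S) : S.card ≤ 3*k+1 := by
  obtain ⟨hmult, hacyc⟩ := hS
  rw [Finset.card_eq_sum_card_fiberwise (f := clV k) (t := Finset.univ) (fun x _ => Finset.mem_univ _)]
  have hle : ∀ c : CL k, (S.filter (fun v => clV k v = c)).card ≤ Sum.elim (fun _ => 1) (fun _ => 2) c := by
    rintro (i | j)
    · exact tri_fiber_le k S hmult i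
    · exact k4_fiber_le k S hacyc j
  have h1 : (∑ c : CL k, (S.filter (fun v => clV k v = c)).card)
      ≤ ∑ c : CL k, Sum.elim (fun _ => 1) (fun _ => 2) c :=
    Finset.sum_le_sum (fun c _ => hle c)
  have h2 : (∑ c : CL k, Sum.elim (fun _ => 1) (fun _ => 2) c) = (k-1)*1 + (k+1)*2 := by
    rw [Fintype.sum_sum_type]
    simp [Finset.sum_const, Finset.card_univ, mul_comm]
  have h3 : (k-1)*1 + (k+1)*2 ≤ 3*k+1 := by omega
  exact le_trans (le_trans h1 (le_of_eq h2)) h3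

lemma forestNum_G (hk : 1 ≤ k) : (MG k).forestNum = 3*k+1 := by
  have hmem : (3*k+1) ∈ {n | ∃ S : Finset (GV k), (MG k).IsInducedForest S ∧ S.card = n} :=
    ⟨FS k, FS_forest k, FS_card k hk⟩
  apply le_antisymm
  · apply csSup_le ⟨_, hmem⟩
    rintro n ⟨S, hS, rfl⟩
    exact forest_upper k hk S hS
  · exact le_csSup ⟨3*k+1, by rintro n ⟨S, hS, rfl⟩; exact forest_upper k hk S hS⟩ hmem

end Global10

/-- for every `k ≥ 1` there is a planar multigraph on `7k + 1`
vertices admitting a plane embedding without `2`-faces whose maximum induced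
forest has exactly `3k + 1` vertices. -/
theorem construction_three_sevenths (k : ℕ) (hk : 1 ≤ k) :
    ∃ (V : Type) (_ : Fintype V) (M : Multigraph V) (E : M.PlaneEmbedding),
      E.NoTwoFaces ∧ Nat.card V = 7 * k + 1 ∧ M.forestNum = 3 * k + 1 := by
  refine ⟨GV k, inferInstance, MG k, PE k, noTwoFaces_G k hk, ?_, forestNum_G k hk⟩
  rw [card_GV]
  omega
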